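/- Let Σ be a counting signature, let 𝔄 be a finitely branching chromatic structure interpreting Σ, let Π' and Π'' be disjoint nonempty sets of 1-types over Σ, and let Π = Π' ∪ Π''. Suppose B ⊆ A is both a Π'-group and a Π''-group (hence also a Π-group). Let J' be the number of distinct Π'-profiles realized in 𝔄 by the elements of B, and J'' the number of distinct Π''-profiles realized in 𝔄 by the elements of B. Then there exists a (Π,B)-approximation 𝔄'' to 𝔄 in which at most J' + J'' distinct Π-profiles are realized by the elements of B. -/

import Mathlib

/-- A counting signature: finite sets of unary and binary predicate symbols,
with a distinguished finite set of binary predicates (the counting predicates). -/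
structure CSig where
  U : Type
  B : Type
  [instU : Fintype U]
  [instDU : DecidableEq U]
  [instB : Fintype B]
  [instDB : DecidableEq B]
  counting : Finset B

attribute [instance] CSig.instU CSig.instDU CSig.instB CSig.instDB

/-- A structure interpreting a counting signature over domain `A`. -/
structure Struc (σ : CSig) (A : Type) where
  unary : σ.U → A → Bool
  binary : σ.B → A → A → Bool

/-- A 1-type over `σ`: a truth assignment to all literals in the single variable x. -/
structure OneType (σ : CSig) where
  u : σ.U → Bool
  d : σ.B → Bool
deriving DecidableEq, Fintype

/-- A 2-type over `σ`: a truth assignment to all equality-free literals in x, y. -/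
structure TwoType (σ : CSig) where
  ux : σ.U → Bool
  uy : σ.U → Bool
  dx : σ.B → Bool
  dy : σ.B → Bool
  rxy : σ.B → Bool
  ryx : σ.B → Bool
deriving DecidableEq

variable {σ : CSig} {A : Type}

/-- Explicit equivalence of `TwoType σ` with a product, giving finiteness. -/
def TwoType.equivProd (σ : CSig) :
    TwoType σ ≃ ((σ.U → Bool) × (σ.U → Bool) × (σ.B → Bool) × (σ.B → Bool) ×
      (σ.B → Bool) × (σ.B → Bool)) where
  toFun τ := ⟨τ.ux, τ.uy, τ.dx, τ.dy, τ.rxy, τ.ryx⟩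
  invFun p := ⟨p.1, p.2.1, p.2.2.1, p.2.2.2.1, p.2.2.2.2.1, p.2.2.2.2.2⟩
  left_inv τ := rfl
  right_inv p := rfl

instance : Fintype (TwoType σ) := Fintype.ofEquiv _ (TwoType.equivProd σ).symm

/-- The result of transposing x and y in a 2-type. -/
def TwoType.inv (τ : TwoType σ) : TwoType σ := ⟨τ.uy, τ.ux, τ.dy, τ.dx, τ.ryx, τ.rxy⟩

/-- The 1-type (of x) included in a 2-type. -/
def TwoType.tp1 (τ : TwoType σ) : OneType σ := ⟨τ.ux, τ.dx⟩

/-- tp₂(τ) = tp₁(τ⁻¹). -/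
def TwoType.tp2 (τ : TwoType σ) : OneType σ := ⟨τ.uy, τ.dy⟩

/-- The 1-type of an element. -/
def Struc.tp1 (S : Struc σ A) (a : A) : OneType σ :=
  ⟨fun p => S.unary p a, fun f => S.binary f a a⟩

/-- The 2-type of a pair of (distinct) elements. -/
def Struc.tp2 (S : Struc σ A) (a b : A) : TwoType σ :=
  ⟨fun p => S.unary p a, fun p => S.unary p b,
   fun f => S.binary f a a, fun f => S.binary f b b,
   fun f => S.binary f a b, fun f => S.binary f b a⟩

/-- A 2-type is a message-type if it contains f(x,y) for some counting predicate f. -/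
def IsMessage (σ : CSig) (τ : TwoType σ) : Prop := ∃ f ∈ σ.counting, τ.rxy f = true

instance : DecidablePred (IsMessage σ) := fun τ => by unfold IsMessage; infer_instance

/-- A message-type whose inverse is also a message-type. -/
def IsInvertible (σ : CSig) (τ : TwoType σ) : Prop := IsMessage σ τ ∧ IsMessage σ τ.inv

instance : DecidablePred (IsInvertible σ) := fun τ => by unfold IsInvertible; infer_instance

/-- A 2-type is silent if neither it nor its inverse is a message-type. -/
def IsSilent (σ : CSig) (τ : TwoType σ) : Prop := ¬ IsMessage σ τ ∧ ¬ IsMessage σ τ.inv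

/-- The (sub)type of message-types over σ. -/
def MsgType (σ : CSig) := {τ : TwoType σ // IsMessage σ τ}

instance : Fintype (MsgType σ) := Subtype.fintype _
instance : DecidableEq (MsgType σ) := fun a b => by
  unfold MsgType at a b; exact Subtype.instDecidableEq a b

/-- Y-branching: every element sends at most Y messages along each counting predicate. -/
def Struc.Branching (S : Struc σ A) (Y : ℕ) : Prop :=
  ∀ a : A, ∀ f ∈ σ.counting, {b : A | b ≠ a ∧ S.binary f a b = true}.encard ≤ (Y : ℕ∞)

def Struc.FinitelyBranching (S : Struc σ A) : Prop := ∃ Y : ℕ, S.Branching Y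

/-- Chromatic: distinct elements connected by a chain of 1 or 2 invertible
message-types have distinct 1-types. -/
def Struc.Chromatic (S : Struc σ A) : Prop :=
  (∀ a a' : A, a ≠ a' → IsInvertible σ (S.tp2 a a') → S.tp1 a ≠ S.tp1 a') ∧
  (∀ a a' a'' : A, a ≠ a' → a' ≠ a'' → a ≠ a'' →
     IsInvertible σ (S.tp2 a a') → IsInvertible σ (S.tp2 a' a'') → S.tp1 a ≠ S.tp1 a'')

/-- Z-differentiated: each 1-type is realized either at most once or more than Z times. -/
def Struc.Differentiated (S : Struc σ A) (Z : ℕ) : Prop :=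
  ∀ π : OneType σ, {a : A | S.tp1 a = π}.encard ≤ 1 ∨ (Z : ℕ∞) < {a : A | S.tp1 a = π}.encard

/-- π and π' form a noisy pair: no silent 2-type connects an element of 1-type π
to an element of 1-type π'. -/
def NoisyPair (S : Struc σ A) (π π' : OneType σ) : Prop :=
  ¬ ∃ a a' : A, a ≠ a' ∧ S.tp1 a = π ∧ S.tp1 a' = π' ∧ IsSilent σ (S.tp2 a a')

/-- The Π-profile of a: for each message-type μ, the number of elements b with 1-type
in Π such that tp[a,b] = μ. -/
noncomputable def Struc.pr (S : Struc σ A) (P : Set (OneType σ)) (a : A) : MsgType σ → ℕ∞ :=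
  fun μ => {b : A | b ≠ a ∧ S.tp1 b ∈ P ∧ S.tp2 a b = μ.1}.encard

/-- The Π-count of a: for each counting predicate f, the number of elements b ≠ a with
1-type in Π such that f[a,b] holds. -/
noncomputable def Struc.ct (S : Struc σ A) (P : Set (OneType σ)) (a : A) :
    {f : σ.B // f ∈ σ.counting} → ℕ∞ :=
  fun f => {b : A | b ≠ a ∧ S.tp1 b ∈ P ∧ S.binary f.1 a b = true}.encard

/-- A Π-group: all elements share the same 1-type and the same Π-count. -/
def PiGroup (S : Struc σ A) (P : Set (OneType σ)) (B : Set A) : Prop :=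
  ∀ a ∈ B, ∀ b ∈ B, S.tp1 a = S.tp1 b ∧ S.ct P a = S.ct P b

/-- A π-patch: a {π}-group all of whose elements have {π}-profiles agreeing on the
invertible message-types (the first M* coordinates). -/
def PiPatch (S : Struc σ A) (π : OneType σ) (B : Set A) : Prop :=
  PiGroup S {π} B ∧
  ∀ a ∈ B, ∀ b ∈ B, ∀ μ : MsgType σ, IsInvertible σ μ.1 → S.pr {π} a μ = S.pr {π} b μ

/-- τ is realized in S. -/
def Realizes2 (S : Struc σ A) (τ : TwoType σ) : Prop := ∃ a b : A, a ≠ b ∧ S.tp2 a b = τ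

/-- (Π,B)-approximation. -/
def PiBApprox (S S' : Struc σ A) (P : Set (OneType σ)) (B : Set A) : Prop :=
  S'.Chromatic ∧
  (∀ τ : TwoType σ, Realizes2 S' τ → Realizes2 S τ) ∧
  ∀ a : A,
    S'.tp1 a = S.tp1 a ∧
    S'.pr Pᶜ a = S.pr Pᶜ a ∧
    (a ∉ B → S'.pr Set.univ a = S.pr Set.univ a) ∧
    (a ∈ B → S'.ct P a = S.ct P a)
/-- A star-type: a 1-type together with a vector of multiplicities indexed by the
message-types. -/
structure StarType (σ : CSig) where
  tp : OneType σ
  v : MsgType σ → ℕ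
deriving DecidableEq

/-- The defining condition on star-types: v(μ) > 0 implies tp₁(μ) = π. -/
def StarType.IsValid (s : StarType σ) : Prop :=
  ∀ μ : MsgType σ, 0 < s.v μ → μ.1.tp1 = s.tp

/-- The star-type of an element: its 1-type together with its profile. -/
noncomputable def StarOf (S : Struc σ A) (a : A) : StarType σ where
  tp := S.tp1 a
  v := fun μ => ({b : A | b ≠ a ∧ S.tp2 a b = μ.1}.encard).toNat

/-- X-sparse: at most X distinct star-types are realized. -/
noncomputable def Struc.Sparse (S : Struc σ A) (X : ℕ) : Prop :=
  {st : StarType σ | ∃ a : A, StarOf S a = st}.encard ≤ (X : ℕ∞)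

/-- A chromatic star-type: for every 1-type π', the multiplicities of invertible
message-types μ with tp₂(μ) = π' sum to at most 1, and to 0 when π' = tp. -/
def StarType.Chromatic (s : StarType σ) : Prop :=
  ∀ π' : OneType σ,
    (∑ μ ∈ Finset.univ.filter (fun μ : MsgType σ => IsInvertible σ μ.1 ∧ μ.1.tp2 = π'),
        s.v μ) ≤ 1 ∧
    (π' = s.tp →
      (∑ μ ∈ Finset.univ.filter (fun μ : MsgType σ => IsInvertible σ μ.1 ∧ μ.1.tp2 = π'),
        s.v μ) = 0)

/-- A frame over σ: a finite set of (pairwise distinct) star-types, a set I of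
unordered pairs of 1-types, and a choice θ of a silent 2-type for each pair in I. -/
structure Frame (σ : CSig) where
  stars : Finset (StarType σ)
  valid : ∀ s ∈ stars, s.IsValid
  I : Set (Sym2 (OneType σ))
  θ : Sym2 (OneType σ) → TwoType σ
  hθ : ∀ p ∈ I, IsSilent σ (θ p) ∧ Sym2.mk (θ p).tp1 (θ p).tp2 = p

/-- Y-bounded frame: all star-type multiplicities are at most Y. -/
def Frame.Bounded (F : Frame σ) (Y : ℕ) : Prop :=
  ∀ s ∈ F.stars, ∀ μ : MsgType σ, s.v μ ≤ Y

/-- A chromatic frame: all its star-types are chromatic. -/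
def Frame.Chromatic (F : Frame σ) : Prop := ∀ s ∈ F.stars, s.Chromatic

/-- F describes S: the stars of F are exactly the realized star-types; I consists of the
non-noisy pairs of 1-types; and each θ-value is realized. -/
def Describes (F : Frame σ) (S : Struc σ A) : Prop :=
  (∀ st : StarType σ, st ∈ F.stars ↔ ∃ a : A, StarOf S a = st) ∧
  (∀ π π' : OneType σ, Sym2.mk π π' ∈ F.I ↔ ¬ NoisyPair S π π') ∧
  (∀ p ∈ F.I, ∃ a b : A, a ≠ b ∧ S.tp2 a b = F.θ p)

/-- The number M* of invertible message-types over σ. -/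
def MstarCard (σ : CSig) : ℕ :=
  (Finset.univ.filter (fun μ : MsgType σ => IsInvertible σ μ.1)).card

/-- p_{ik} = 1: the star-type sends no message to any element of 1-type π. -/
def PZero (s : StarType σ) (π : OneType σ) : Prop :=
  ∀ μ : MsgType σ, μ.1.tp2 = π → s.v μ = 0

instance (s : StarType σ) (π : OneType σ) : Decidable (PZero s π) := by
  unfold PZero; infer_instance

/-- r_{ik}: total multiplicity of non-invertible message-types with tp₂ = π. -/
def RCoeff (s : StarType σ) (π : OneType σ) : ℕ :=
  ∑ μ ∈ Finset.univ.filter (fun μ : MsgType σ => ¬ IsInvertible σ μ.1 ∧ μ.1.tp2 = π), s.v μ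

/-- s_{ik}: total multiplicity of message-types with tp₂ = π. -/
def SCoeff (s : StarType σ) (π : OneType σ) : ℕ :=
  ∑ μ ∈ Finset.univ.filter (fun μ : MsgType σ => μ.1.tp2 = π), s.v μ

/-- u_i = Σ_k o_{ik} w_k. -/
def Frame.uVal (F : Frame σ) (w : StarType σ → ℕ) (π : OneType σ) : ℕ :=
  ∑ s ∈ F.stars.filter (fun s => s.tp = π), w s

/-- v_j = Σ_k q_{jk} w_k. -/
def Frame.vVal (F : Frame σ) (w : StarType σ → ℕ) (μ : MsgType σ) : ℕ :=
  ∑ s ∈ F.stars, s.v μ * w s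

/-- x_{ii'} = Σ_k o_{ik} p_{i'k} w_k. -/
def Frame.xVal (F : Frame σ) (w : StarType σ → ℕ) (π π' : OneType σ) : ℕ :=
  ∑ s ∈ F.stars.filter (fun s => s.tp = π ∧ PZero s π'), w s

/-- w is a Z-solution of F (conditions C1–C6, over positive integers). -/
def IsZSolution (F : Frame σ) (Z : ℕ) (w : StarType σ → ℕ) : Prop :=
  (∀ s ∈ F.stars, 0 < w s) ∧
  (∀ μ μ' : MsgType σ, IsInvertible σ μ.1 → μ'.1 = μ.1.inv → F.vVal w μ = F.vVal w μ') ∧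
  (∀ π : OneType σ, ∀ s ∈ F.stars, SCoeff s π ≤ F.uVal w π) ∧
  (∀ π : OneType σ, F.uVal w π ≤ 1 ∨ Z < F.uVal w π) ∧
  (∀ π π' : OneType σ, ∀ s ∈ F.stars, s.tp = π →
     (1 < F.uVal w π ∨ RCoeff s π' ≤ F.xVal w π' π)) ∧
  (∀ π π' : OneType σ, Sym2.mk π π' ∉ F.I → F.uVal w π ≤ 1 ∨ F.uVal w π' ≤ 1) ∧
  (∀ π π' : OneType σ, ∀ s ∈ F.stars, Sym2.mk π π' ∉ F.I → s.tp = π →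
     (1 < F.uVal w π ∨ F.xVal w π' π ≤ RCoeff s π'))

/-- u_i over ℕ* = ℕ ∪ {ℵ₀}. -/
def Frame.uValE (F : Frame σ) (w : StarType σ → ℕ∞) (π : OneType σ) : ℕ∞ :=
  ∑ s ∈ F.stars.filter (fun s => s.tp = π), w s

/-- v_j over ℕ*. -/
def Frame.vValE (F : Frame σ) (w : StarType σ → ℕ∞) (μ : MsgType σ) : ℕ∞ :=
  ∑ s ∈ F.stars, (s.v μ : ℕ∞) * w s

/-- x_{ii'} over ℕ*. -/
def Frame.xValE (F : Frame σ) (w : StarType σ → ℕ∞) (π π' : OneType σ) : ℕ∞ :=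
  ∑ s ∈ F.stars.filter (fun s => s.tp = π ∧ PZero s π'), w s

/-- w is an extended Z-solution of F: a Z-solution over ℕ* = ℕ ∪ {ℵ₀}
(with nonzero components). -/
def IsExtZSolution (F : Frame σ) (Z : ℕ) (w : StarType σ → ℕ∞) : Prop :=
  (∀ s ∈ F.stars, w s ≠ 0) ∧
  (∀ μ μ' : MsgType σ, IsInvertible σ μ.1 → μ'.1 = μ.1.inv → F.vValE w μ = F.vValE w μ') ∧
  (∀ π : OneType σ, ∀ s ∈ F.stars, (SCoeff s π : ℕ∞) ≤ F.uValE w π) ∧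
  (∀ π : OneType σ, F.uValE w π ≤ 1 ∨ (Z : ℕ∞) < F.uValE w π) ∧
  (∀ π π' : OneType σ, ∀ s ∈ F.stars, s.tp = π →
     (1 < F.uValE w π ∨ (RCoeff s π' : ℕ∞) ≤ F.xValE w π' π)) ∧
  (∀ π π' : OneType σ, Sym2.mk π π' ∉ F.I → F.uValE w π ≤ 1 ∨ F.uValE w π' ≤ 1) ∧
  (∀ π π' : OneType σ, ∀ s ∈ F.stars, Sym2.mk π π' ∉ F.I → s.tp = π →
     (1 < F.uValE w π ∨ F.xValE w π' π ≤ (RCoeff s π' : ℕ∞)))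

/-- The data of a normal-form sentence φ*: a quantifier-free equality-free α(x)
(given semantically by the set of 1-types entailing it), a quantifier-free
equality-free β(x,y) (given by the set of 2-types entailing it), and positive
counts C_h for the counting predicates. -/
structure NormalForm (σ : CSig) where
  alpha : OneType σ → Prop
  beta : TwoType σ → Prop
  C : σ.B → ℕ
  hC : ∀ f ∈ σ.counting, 0 < C f

/-- S ⊨ φ*. -/
def SatNF (N : NormalForm σ) (S : Struc σ A) : Prop :=
  (∀ a : A, N.alpha (S.tp1 a)) ∧
  (∀ a b : A, a ≠ b → N.beta (S.tp2 a b)) ∧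
  (∀ f ∈ σ.counting, ∀ a : A,
     {b : A | b ≠ a ∧ S.binary f a b = true}.encard = (N.C f : ℕ∞))

/-- F ⊨ φ*. -/
def FrameSatNF (N : NormalForm σ) (F : Frame σ) : Prop :=
  (∀ s ∈ F.stars, N.alpha s.tp) ∧
  (∀ s ∈ F.stars, ∀ μ : MsgType σ, 0 < s.v μ → N.beta μ.1 ∧ N.beta μ.1.inv) ∧
  (∀ p ∈ F.I, N.beta (F.θ p) ∧ N.beta ((F.θ p).inv)) ∧
  (∀ s ∈ F.stars, ∀ f ∈ σ.counting,
     (∑ μ ∈ Finset.univ.filter (fun μ : MsgType σ => μ.1.rxy f = true), s.v μ) = N.C f)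

/-- The signature obtained from σ by adding k new unary predicates; the counting
predicates are unchanged. -/
def addUnary (σ : CSig) (k : ℕ) : CSig where
  U := σ.U ⊕ Fin k
  B := σ.B
  counting := σ.counting

/-- S' (interpreting σ with k extra unary predicates) is an expansion of S:
it agrees with S on all predicates of σ. -/
def IsExpansion {σ : CSig} {k : ℕ} {A : Type} (S' : Struc (addUnary σ k) A)
    (S : Struc σ A) : Prop :=
  (∀ (p : σ.U) (a : A), S'.unary (Sum.inl p) a = S.unary p a) ∧
  (∀ (f : σ.B) (a b : A), S'.binary f a b = S.binary f a b)
open Set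

lemma aux_equiv {α β : Type*} [Countable α] [Countable β] {s : Set α} {t : Set β}
    (h : s.encard = t.encard) : Nonempty (s ≃ t) := by
  by_cases hfin : s.Finite
  · have htfin : t.Finite := by
      rw [← Set.not_infinite, ← Set.encard_eq_top_iff, ← h, Set.encard_eq_top_iff,
        Set.not_infinite]; exact hfin
    have : Finite s := hfin.to_subtype
    have : Finite t := htfin.to_subtype
    refine Finite.card_eq.mp ?_
    rw [Nat.card_coe_set_eq, Nat.card_coe_set_eq, Set.ncard, Set.ncard, h]
  · have hsinf : s.Infinite := hfin
    have htinf : t.Infinite := by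
      rw [← Set.encard_eq_top_iff, ← h, Set.encard_eq_top_iff]; exact hsinf
    have : Infinite s := hsinf.to_subtype
    have : Infinite t := htinf.to_subtype
    obtain ⟨ds⟩ := nonempty_denumerable s
    obtain ⟨dt⟩ := nonempty_denumerable t
    exact ⟨(ds.eqv _).trans (dt.eqv _).symm⟩

lemma infinite_split {α : Type*} [Countable α] {s : Set α} (hs : s.Infinite) :
    ∃ u ⊆ s, u.Infinite ∧ (s \ u).Infinite := by
  have : Infinite s := hs.to_subtype
  obtain ⟨ds⟩ := nonempty_denumerable s
  let f : ℕ ≃ s := (ds.eqv _).symm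
  refine ⟨Subtype.val '' (f '' {n | Even n}), ?_, ?_, ?_⟩
  · rintro x ⟨y, -, rfl⟩; exact y.2
  · refine Set.Infinite.image (Subtype.val_injective.injOn) (Set.Infinite.image (f.injective.injOn) ?_)
    exact Set.infinite_of_injective_forall_mem (f := fun k : ℕ => 2 * k)
      (fun a b hab => by simpa using hab) (fun a => ⟨a, two_mul a⟩)
  · have hsub : Subtype.val '' (f '' {n | ¬ Even n}) ⊆ s \ Subtype.val '' (f '' {n | Even n}) := by
      rintro x ⟨y, ⟨n, hn, rfl⟩, rfl⟩
      refine ⟨(f n).2, ?_⟩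
      rintro ⟨z, ⟨m, hm, rfl⟩, hzx⟩
      have : f m = f n := Subtype.val_injective hzx
      exact hn (f.injective this ▸ hm)
    refine Set.Infinite.mono hsub ?_
    refine Set.Infinite.image (Subtype.val_injective.injOn) (Set.Infinite.image (f.injective.injOn) ?_)
    exact Set.infinite_of_injective_forall_mem (f := fun k : ℕ => 2 * k + 1)
      (fun a b hab => by simpa using hab) (fun a => by simp [Nat.even_add_one, parity_simps])

lemma helper_compl {γ : Type*} [Countable γ] {s : Set γ} (hs : s.encard = ⊤) {k : ℕ∞}
    (hk : sᶜ.encard ≤ k) : ∃ u ⊆ s, u.encard = ⊤ ∧ uᶜ.encard = k := by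
  set n := sᶜ.encard with hn
  by_cases hm : k - n = ⊤
  · have hktop : k = ⊤ := top_le_iff.mp (hm ▸ tsub_le_self)
    obtain ⟨u, hus, hui, hdi⟩ := infinite_split (Set.encard_eq_top_iff.mp hs)
    refine ⟨u, hus, Set.encard_eq_top_iff.mpr hui, ?_⟩
    rw [hktop, Set.encard_eq_top_iff]
    exact hdi.mono (fun x hx => hx.2)
  · obtain ⟨W, hWs, hWcard⟩ := Set.exists_subset_encard_eq (le_top.trans_eq hs.symm : k - n ≤ s.encard)
    refine ⟨s \ W, Set.diff_subset, ?_, ?_⟩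
    · by_contra hne
      have h1 : s.encard ≤ (s \ W).encard + W.encard := by
        refine le_trans (Set.encard_mono ?_) (Set.encard_union_le _ _)
        rw [Set.diff_union_self]; exact Set.subset_union_left
      rw [hs, hWcard] at h1
      exact (WithTop.add_ne_top.mpr ⟨hne, hm⟩) (top_le_iff.mp h1)
    · have hcompl : (s \ W)ᶜ = sᶜ ∪ W := by
        ext x; simp only [Set.mem_compl_iff, Set.mem_diff, Set.mem_union, not_and, not_not]
        constructor
        · intro h; by_cases hxs : x ∈ s
          · exact Or.inr (h hxs)
          · exact Or.inl hxs
        · rintro (h | h) hxs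
          · exact absurd hxs h
          · exact h
      rw [hcompl, Set.encard_union_eq (disjoint_compl_left.mono_right hWs),
        hWcard, ← hn, add_tsub_cancel_of_le hk]

lemma choose_ST {C D : Type*} [Countable C] [Countable D]
    (hCD : (Set.univ : Set C).encard = (Set.univ : Set D).encard)
    (G : Set C) (H : Set D) :
    ∃ S T, S ⊆ G ∧ T ⊆ H ∧ (S = G ∨ T = H) ∧ S.encard = T.encard ∧
      Sᶜ.encard = Tᶜ.encard := by
  by_cases hkl : G.encard ≤ H.encard
  · by_cases hktop : G.encard = ⊤
    · have hltop : H.encard = ⊤ := top_le_iff.mp (hktop ▸ hkl)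
      by_cases hnn' : Gᶜ.encard ≤ Hᶜ.encard
      · obtain ⟨S, hSG, hScard, hScompl⟩ := helper_compl hktop hnn'
        refine ⟨S, H, hSG, le_refl H, Or.inr rfl, by rw [hScard, hltop], by rw [hScompl]⟩
      · obtain ⟨T, hTH, hTcard, hTcompl⟩ := helper_compl hltop (le_of_not_ge hnn')
        refine ⟨G, T, le_refl G, hTH, Or.inl rfl, by rw [hTcard, hktop], by rw [hTcompl]⟩
    · obtain ⟨T, hTH, hTcard⟩ := Set.exists_subset_encard_eq hkl
      refine ⟨G, T, le_refl G, hTH, Or.inl rfl, hTcard.symm, ?_⟩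
      have h1 : Gᶜ.encard + G.encard = Tᶜ.encard + G.encard := by
        calc Gᶜ.encard + G.encard = (Set.univ : Set C).encard := by
              rw [add_comm]; exact Set.encard_add_encard_compl G
          _ = (Set.univ : Set D).encard := hCD
          _ = Tᶜ.encard + G.encard := by
              rw [← hTcard, add_comm]; exact (Set.encard_add_encard_compl T).symm
      exact (WithTop.add_right_inj hktop).mp h1
  · have hlk : H.encard ≤ G.encard := le_of_not_ge hkl
    have hltop : H.encard ≠ ⊤ := fun h => hkl (h ▸ le_top)
    obtain ⟨S, hSG, hScard⟩ := Set.exists_subset_encard_eq hlk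
    refine ⟨S, H, hSG, le_refl H, Or.inr rfl, hScard, ?_⟩
    have h1 : Sᶜ.encard + H.encard = Hᶜ.encard + H.encard := by
      calc Sᶜ.encard + H.encard = (Set.univ : Set C).encard := by
            rw [← hScard, add_comm]; exact Set.encard_add_encard_compl S
        _ = (Set.univ : Set D).encard := hCD
        _ = Hᶜ.encard + H.encard := by
            rw [add_comm]; exact (Set.encard_add_encard_compl H).symm
    exact (WithTop.add_right_inj hltop).mp h1

lemma assemble {X Y C D : Type*} (g : C → X) (h : D → Y)
    (S : Set C) (T : Set D) (x0 : X) (y0 : Y)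
    (hgS : ∀ c ∈ S, g c = x0) (hhT : ∀ d ∈ T, h d = y0)
    (eST : S ≃ T) (ρ' : ↥(Sᶜ) ≃ ↥(Tᶜ)) (k : ℕ∞)
    (hb : (Set.range fun c : ↥(Sᶜ) => (g c.1, h (ρ' c).1)).encard ≤ k) :
    ∃ ρ : C ≃ D, (Set.range fun c => (g c, h (ρ c))).encard ≤ k + 1 := by
  classical
  let e1 : {c // c ∈ S} ⊕ {c // ¬ c ∈ S} ≃ C := Equiv.sumCompl (· ∈ S)
  let e2 : {d // d ∈ T} ⊕ {d // ¬ d ∈ T} ≃ D := Equiv.sumCompl (· ∈ T)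
  let eS' : {c // ¬ c ∈ S} ≃ ↥(Sᶜ) := Equiv.subtypeEquivRight (fun c => (Set.mem_compl_iff S c).symm)
  let eT' : {d // ¬ d ∈ T} ≃ ↥(Tᶜ) := Equiv.subtypeEquivRight (fun d => (Set.mem_compl_iff T d).symm)
  let ρ : C ≃ D := e1.symm.trans ((Equiv.sumCongr eST (eS'.trans (ρ'.trans eT'.symm))).trans e2)
  have hpos : ∀ (c : C) (hc : c ∈ S), ρ c = (eST ⟨c, hc⟩).1 := by
    intro c hc
    simp only [ρ, e1, e2, Equiv.trans_apply, Equiv.sumCompl_symm_apply_of_pos hc,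
      Equiv.sumCongr_apply, Sum.map_inl, Equiv.sumCompl_apply_inl]
  have hneg : ∀ (c : C) (hc : ¬ c ∈ S), ρ c = (ρ' (eS' ⟨c, hc⟩)).1 := by
    intro c hc
    simp only [ρ, e1, e2, eT', Equiv.trans_apply, Equiv.sumCompl_symm_apply_of_neg hc,
      Equiv.sumCongr_apply, Sum.map_inr, Equiv.sumCompl_apply_inr, Equiv.subtypeEquivRight_symm_apply_coe]
  refine ⟨ρ, ?_⟩
  have hsub : (Set.range fun c => (g c, h (ρ c))) ⊆
      insert (x0, y0) (Set.range fun c : ↥(Sᶜ) => (g c.1, h (ρ' c).1)) := by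
    rintro p ⟨c, rfl⟩
    by_cases hc : c ∈ S
    · left
      have h1 : ρ c ∈ T := hpos c hc ▸ (eST ⟨c, hc⟩).2
      show (g c, h (ρ c)) = (x0, y0)
      rw [hgS c hc, hhT _ h1]
    · right
      refine ⟨eS' ⟨c, hc⟩, ?_⟩
      show (g (eS' ⟨c, hc⟩).1, h (ρ' (eS' ⟨c, hc⟩)).1) = (g c, h (ρ c))
      rw [hneg c hc]
      have : ((eS' ⟨c, hc⟩ : ↥(Sᶜ)) : C) = c := rfl
      rw [this]
  calc (Set.range fun c => (g c, h (ρ c))).encard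
      ≤ (insert (x0, y0) (Set.range fun c : ↥(Sᶜ) => (g c.1, h (ρ' c).1))).encard :=
        Set.encard_mono hsub
    _ ≤ (Set.range fun c : ↥(Sᶜ) => (g c.1, h (ρ' c).1)).encard + 1 := Set.encard_insert_le _ _
    _ ≤ k + 1 := add_le_add_left hb 1

lemma pair_lemma {X Y : Type*} :
    ∀ (n : ℕ) (C D : Type) (_ : Countable C) (_ : Countable D)
      (_ : (Set.univ : Set C).encard = (Set.univ : Set D).encard)
      (g : C → X) (h : D → Y) (J' J'' : ℕ), J' + J'' ≤ n →
      (Set.range g).encard ≤ (J' : ℕ∞) → (Set.range h).encard ≤ (J'' : ℕ∞) →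
      ∃ ρ : C ≃ D, (Set.range fun c => (g c, h (ρ c))).encard ≤ ((J' + J'' : ℕ) : ℕ∞) := by
  intro n
  induction n with
  | zero =>
    intro C D hC hD hCD g h J' J'' hn hg hh
    have eC : C ≃ D := (Equiv.Set.univ C).symm.trans ((aux_equiv hCD).some.trans (Equiv.Set.univ D))
    refine ⟨eC, ?_⟩
    have hJ0 : J' = 0 := by omega
    subst hJ0
    have hrange : Set.range g = ∅ :=
      Set.encard_eq_zero.mp (le_antisymm (by exact_mod_cast hg) (zero_le))
    have : IsEmpty C := Set.range_eq_empty_iff.mp hrange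
    rw [Set.range_eq_empty, Set.encard_empty]
    exact zero_le
  | succ n IH =>
    intro C D hC hD hCD g h J' J'' hn hg hh
    by_cases hne : Nonempty C
    · obtain ⟨c0⟩ := hne
      have eC : C ≃ D := (Equiv.Set.univ C).symm.trans ((aux_equiv hCD).some.trans (Equiv.Set.univ D))
      set x0 := g c0 with hx0
      set y0 := h (eC c0) with hy0
      have hJ'pos : 1 ≤ J' := by
        have h1 : (1 : ℕ∞) ≤ (Set.range g).encard :=
          Set.one_le_encard_iff_nonempty.mpr ⟨x0, c0, rfl⟩
        exact_mod_cast h1.trans hg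
      have hJ''pos : 1 ≤ J'' := by
        have h1 : (1 : ℕ∞) ≤ (Set.range h).encard :=
          Set.one_le_encard_iff_nonempty.mpr ⟨y0, eC c0, rfl⟩
        exact_mod_cast h1.trans hh
      obtain ⟨S, T, hSG, hTH, hfull, hST, hSTc⟩ :=
        choose_ST hCD {c | g c = x0} {d | h d = y0}
      have eST : ↥S ≃ ↥T := (aux_equiv hST).some
      have eRest : ↥(Sᶜ) ≃ ↥(Tᶜ) := (aux_equiv hSTc).some
      have hCD' : (Set.univ : Set ↥(Sᶜ)).encard = (Set.univ : Set ↥(Tᶜ)).encard := by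
        rw [Set.encard_univ, Set.encard_univ, ENat.card_congr eRest]
      rcases hfull with hfull | hfull
      · -- S is the full fiber of g
        have hg' : (Set.range fun c : ↥(Sᶜ) => g c.1).encard ≤ ((J' - 1 : ℕ) : ℕ∞) := by
          have hsub : (Set.range fun c : ↥(Sᶜ) => g c.1) ⊆ Set.range g \ {x0} := by
            rintro _ ⟨c, rfl⟩
            refine ⟨⟨c.1, rfl⟩, fun hmem => c.2 (hfull.symm.subset ?_)⟩
            exact hmem
          have h1 : (Set.range g \ {x0}).encard + 1 = (Set.range g).encard :=
            Set.encard_diff_singleton_add_one ⟨c0, rfl⟩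
          have h2 : (Set.range g \ {x0}).encard + 1 ≤ ((J' - 1 : ℕ) : ℕ∞) + 1 := by
            rw [h1]
            refine hg.trans ?_
            have : ((J' - 1 : ℕ) : ℕ∞) + 1 = ((J' - 1 + 1 : ℕ) : ℕ∞) := by push_cast; ring
            rw [this]
            exact_mod_cast Nat.le_of_eq (by omega)
          have h3 := (WithTop.add_le_add_iff_right (by norm_num : (1:ℕ∞) ≠ ⊤)).mp h2
          exact le_trans (Set.encard_mono hsub) h3
        have hh' : (Set.range fun d : ↥(Tᶜ) => h d.1).encard ≤ (J'' : ℕ∞) := by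
          refine le_trans (Set.encard_mono ?_) hh
          rintro _ ⟨d, rfl⟩; exact ⟨d.1, rfl⟩
        obtain ⟨ρ', hρ'⟩ := IH ↥(Sᶜ) ↥(Tᶜ) inferInstance inferInstance hCD'
          (fun c => g c.1) (fun d => h d.1) (J' - 1) J'' (by omega) hg' hh'
        obtain ⟨ρ, hρ⟩ := assemble g h S T x0 y0
          (fun c hc => by rw [hfull] at hc; exact hc) (fun d hd => hTH hd) eST ρ'
          (((J' - 1 + J'' : ℕ) : ℕ∞)) hρ'
        refine ⟨ρ, hρ.trans ?_⟩
        have : ((J' - 1 + J'' : ℕ) : ℕ∞) + 1 = ((J' - 1 + J'' + 1 : ℕ) : ℕ∞) := by push_cast; ring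
        rw [this]
        exact_mod_cast Nat.le_of_eq (by omega)
      · -- T is the full fiber of h
        have hh' : (Set.range fun d : ↥(Tᶜ) => h d.1).encard ≤ ((J'' - 1 : ℕ) : ℕ∞) := by
          have hsub : (Set.range fun d : ↥(Tᶜ) => h d.1) ⊆ Set.range h \ {y0} := by
            rintro _ ⟨d, rfl⟩
            refine ⟨⟨d.1, rfl⟩, fun hmem => d.2 (hfull.symm.subset ?_)⟩
            exact hmem
          have h1 : (Set.range h \ {y0}).encard + 1 = (Set.range h).encard :=
            Set.encard_diff_singleton_add_one ⟨eC c0, rfl⟩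
          have h2 : (Set.range h \ {y0}).encard + 1 ≤ ((J'' - 1 : ℕ) : ℕ∞) + 1 := by
            rw [h1]
            refine hh.trans ?_
            have : ((J'' - 1 : ℕ) : ℕ∞) + 1 = ((J'' - 1 + 1 : ℕ) : ℕ∞) := by push_cast; ring
            rw [this]
            exact_mod_cast Nat.le_of_eq (by omega)
          have h3 := (WithTop.add_le_add_iff_right (by norm_num : (1:ℕ∞) ≠ ⊤)).mp h2
          exact le_trans (Set.encard_mono hsub) h3
        have hg' : (Set.range fun c : ↥(Sᶜ) => g c.1).encard ≤ (J' : ℕ∞) := by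
          refine le_trans (Set.encard_mono ?_) hg
          rintro _ ⟨c, rfl⟩; exact ⟨c.1, rfl⟩
        obtain ⟨ρ', hρ'⟩ := IH ↥(Sᶜ) ↥(Tᶜ) inferInstance inferInstance hCD'
          (fun c => g c.1) (fun d => h d.1) J' (J'' - 1) (by omega) hg' hh'
        obtain ⟨ρ, hρ⟩ := assemble g h S T x0 y0
          (fun c hc => hSG hc) (fun d hd => by rw [hfull] at hd; exact hd) eST ρ'
          (((J' + (J'' - 1) : ℕ) : ℕ∞)) hρ'
        refine ⟨ρ, hρ.trans ?_⟩
        have : ((J' + (J'' - 1) : ℕ) : ℕ∞) + 1 = ((J' + (J'' - 1) + 1 : ℕ) : ℕ∞) := by push_cast; ring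
        rw [this]
        exact_mod_cast Nat.le_of_eq (by omega)
    · have : IsEmpty C := not_nonempty_iff.mp hne
      have eC : C ≃ D := (Equiv.Set.univ C).symm.trans ((aux_equiv hCD).some.trans (Equiv.Set.univ D))
      refine ⟨eC, ?_⟩
      rw [Set.range_eq_empty, Set.encard_empty]
      exact zero_le

section Construct
variable {σ : CSig} {A : Type}

lemma encard_split {A : Type} (B : Set A) (rho : A → A) (hinj : Set.InjOn rho B)
    (s t : Set A) (h1 : s \ B = t \ B) (h2 : rho '' (s ∩ B) = t ∩ B) :
    s.encard = t.encard := by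
  have hs : s = (s ∩ B) ∪ (s \ B) := (Set.inter_union_diff s B).symm
  have ht : t = (t ∩ B) ∪ (t \ B) := (Set.inter_union_diff t B).symm
  have hd1 : Disjoint (s ∩ B) (s \ B) := by
    rw [Set.disjoint_left]; intro x hx hx'; exact hx'.2 hx.2
  have hd2 : Disjoint (t ∩ B) (t \ B) := by
    rw [Set.disjoint_left]; intro x hx hx'; exact hx'.2 hx.2
  rw [hs, ht, Set.encard_union_eq hd1, Set.encard_union_eq hd2, h1, ← h2,
    (hinj.mono Set.inter_subset_right).encard_image]

lemma key_count {A : Type} (B : Set A) (rho : A → A)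
    (hmem : ∀ a ∈ B, rho a ∈ B) (hinj : Set.InjOn rho B) (hsurj : Set.SurjOn rho B B)
    (s t : Set A) (hout : s \ B = t \ B)
    (hBs : ∀ b ∈ B, (b ∈ s ↔ rho b ∈ t)) :
    s.encard = t.encard := by
  apply encard_split B rho hinj s t hout
  ext c; constructor
  · rintro ⟨b, ⟨hbs, hbB⟩, rfl⟩; exact ⟨(hBs b hbB).mp hbs, hmem b hbB⟩
  · rintro ⟨hct, hcB⟩
    obtain ⟨b, hbB, rfl⟩ := hsurj hcB
    exact ⟨b, ⟨(hBs b hbB).mpr hct, hbB⟩, rfl⟩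

lemma construct (S : Struc σ A) (hchr : S.Chromatic)
    (P' P'' : Set (OneType σ)) (hdisj : Disjoint P' P'')
    (B : Set A) (hB' : PiGroup S P' B) (hB'' : PiGroup S P'' B)
    (rho : A → A) (hmem : ∀ a ∈ B, rho a ∈ B)
    (hinj : Set.InjOn rho B) (hsurj : Set.SurjOn rho B B) :
    ∃ S'' : Struc σ A, PiBApprox S S'' (P' ∪ P'') B ∧
      ∀ a ∈ B, ∀ τ : MsgType σ,
        S''.pr (P' ∪ P'') a τ = S.pr P' a τ + S.pr P'' (rho a) τ := by
  classical
  set e : A → A → A := fun a b => if a ∈ B ∧ S.tp1 b ∈ P'' then rho a else a with he_def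
  set S'' : Struc σ A :=
    ⟨S.unary, fun f a b => if a = b then S.binary f a b else S.binary f (e a b) (e b a)⟩
    with hS''def
  have htp1rho : ∀ a ∈ B, S.tp1 (rho a) = S.tp1 a :=
    fun a ha => (hB' _ (hmem a ha) _ ha).1
  have htp1B : ∀ a ∈ B, ∀ b ∈ B, S.tp1 a = S.tp1 b := fun a ha b hb => (hB' a ha b hb).1
  have htpe : ∀ a b, S.tp1 (e a b) = S.tp1 a := by
    intro a b
    by_cases hc : a ∈ B ∧ S.tp1 b ∈ P''
    · rw [he_def]; simp only [if_pos hc]; exact htp1rho a hc.1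
    · rw [he_def]; simp only [if_neg hc]
  have he_pos : ∀ a b, a ∈ B → S.tp1 b ∈ P'' → e a b = rho a := by
    intro a b h1 h2; rw [he_def]; simp only [if_pos (⟨h1, h2⟩ : a ∈ B ∧ S.tp1 b ∈ P'')]
  have he_neg : ∀ a b, ¬ (a ∈ B ∧ S.tp1 b ∈ P'') → e a b = a := by
    intro a b h; rw [he_def]; simp only [if_neg h]
  have he_memB : ∀ a b, a ∈ B → e a b ∈ B := by
    intro a b ha
    by_cases hc : a ∈ B ∧ S.tp1 b ∈ P''
    · rw [he_pos a b hc.1 hc.2]; exact hmem a ha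
    · rw [he_neg a b hc]; exact ha
  have he_ne : ∀ a b, a ≠ b → e a b ≠ e b a := by
    intro a b hab
    by_cases h1 : a ∈ B ∧ S.tp1 b ∈ P''
    · by_cases h2 : b ∈ B ∧ S.tp1 a ∈ P''
      · rw [he_pos a b h1.1 h1.2, he_pos b a h2.1 h2.2]
        exact fun h => hab (hinj h1.1 h2.1 h)
      · rw [he_pos a b h1.1 h1.2, he_neg b a h2]
        have hbB : b ∉ B := by
          intro hbB
          refine h2 ⟨hbB, ?_⟩
          rw [htp1B a h1.1 b hbB]
          exact h1.2
        exact fun h => hbB (h ▸ hmem a h1.1)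
    · by_cases h2 : b ∈ B ∧ S.tp1 a ∈ P''
      · rw [he_neg a b h1, he_pos b a h2.1 h2.2]
        have haB : a ∉ B := by
          intro haB
          refine h1 ⟨haB, ?_⟩
          rw [htp1B b h2.1 a haB]
          exact h2.2
        exact fun h => haB (h.symm ▸ hmem b h2.1)
      · rw [he_neg a b h1, he_neg b a h2]; exact hab
  have htp1'' : ∀ a, S''.tp1 a = S.tp1 a := by
    intro a
    show (⟨fun p => S''.unary p a, fun f => S''.binary f a a⟩ : OneType σ) = _
    rw [hS''def]
    simp only [if_pos rfl]
    rfl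
  have htp2'' : ∀ a b, a ≠ b → S''.tp2 a b = S.tp2 (e a b) (e b a) := by
    intro a b hab
    have h1 : S.tp1 (e a b) = S.tp1 a := htpe a b
    have h2 : S.tp1 (e b a) = S.tp1 b := htpe b a
    have hu1 : (fun p => S.unary p (e a b)) = (fun p => S.unary p a) := congrArg OneType.u h1
    have hd1 : (fun f => S.binary f (e a b) (e a b)) = (fun f => S.binary f a a) :=
      congrArg OneType.d h1
    have hu2 : (fun p => S.unary p (e b a)) = (fun p => S.unary p b) := congrArg OneType.u h2
    have hd2 : (fun f => S.binary f (e b a) (e b a)) = (fun f => S.binary f b b) :=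
      congrArg OneType.d h2
    show TwoType.mk (fun p => S''.unary p a) (fun p => S''.unary p b)
      (fun f => S''.binary f a a) (fun f => S''.binary f b b)
      (fun f => S''.binary f a b) (fun f => S''.binary f b a) = _
    rw [hS''def]
    simp only [if_pos rfl, if_neg hab, if_neg (Ne.symm hab)]
    show TwoType.mk (fun p => S.unary p a) (fun p => S.unary p b)
      (fun f => S.binary f a a) (fun f => S.binary f b b)
      (fun f => S.binary f (e a b) (e b a)) (fun f => S.binary f (e b a) (e a b)) = _
    rw [← hu1, ← hu2, ← hd1, ← hd2]
    rfl
  -- set rewriting lemmas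
  have hprset : ∀ (P0 : Set (OneType σ)) (a : A) (μ : MsgType σ),
      {b | b ≠ a ∧ S''.tp1 b ∈ P0 ∧ S''.tp2 a b = μ.1} =
      {b | b ≠ a ∧ S.tp1 b ∈ P0 ∧ S.tp2 (e a b) (e b a) = μ.1} := by
    intro P0 a μ
    ext b
    simp only [Set.mem_setOf_eq]
    constructor
    · rintro ⟨h1, h2, h3⟩
      rw [htp1'' b] at h2
      rw [htp2'' a b (Ne.symm h1)] at h3
      exact ⟨h1, h2, h3⟩
    · rintro ⟨h1, h2, h3⟩
      rw [← htp1'' b] at h2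
      rw [← htp2'' a b (Ne.symm h1)] at h3
      exact ⟨h1, h2, h3⟩
  have hctset : ∀ (P0 : Set (OneType σ)) (a : A) (f : σ.B),
      {b | b ≠ a ∧ S''.tp1 b ∈ P0 ∧ S''.binary f a b = true} =
      {b | b ≠ a ∧ S.tp1 b ∈ P0 ∧ S.binary f (e a b) (e b a) = true} := by
    intro P0 a f
    ext b
    simp only [Set.mem_setOf_eq]
    constructor
    · rintro ⟨h1, h2, h3⟩
      rw [htp1'' b] at h2
      have h3' : (if a = b then S.binary f a b else S.binary f (e a b) (e b a)) = true := h3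
      rw [if_neg (Ne.symm h1)] at h3'
      exact ⟨h1, h2, h3'⟩
    · rintro ⟨h1, h2, h3⟩
      rw [← htp1'' b] at h2
      refine ⟨h1, h2, ?_⟩
      show (if a = b then S.binary f a b else S.binary f (e a b) (e b a)) = true
      rw [if_neg (Ne.symm h1)]
      exact h3
  have hsplit : ∀ (Q R : A → Prop),
      {b | Q b ∧ S.tp1 b ∈ P' ∪ P'' ∧ R b}.encard =
      {b | Q b ∧ S.tp1 b ∈ P' ∧ R b}.encard + {b | Q b ∧ S.tp1 b ∈ P'' ∧ R b}.encard := by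
    intro Q R
    rw [← Set.encard_union_eq (by
      rw [Set.disjoint_left]
      intro x hx hx'
      exact Set.disjoint_left.mp hdisj hx.2.1 hx'.2.1)]
    congr 1
    ext b
    simp only [Set.mem_setOf_eq, Set.mem_union]
    constructor
    · rintro ⟨hq, h | h, hr⟩
      · exact Or.inl ⟨hq, h, hr⟩
      · exact Or.inr ⟨hq, h, hr⟩
    · rintro (⟨hq, h, hr⟩ | ⟨hq, h, hr⟩)
      · exact ⟨hq, Or.inl h, hr⟩
      · exact ⟨hq, Or.inr h, hr⟩
  -- P' part: no change (for a ∈ B)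
  have hP'_part : ∀ a ∈ B, ∀ (R : A → A → Prop),
      {b | b ≠ a ∧ S.tp1 b ∈ P' ∧ R (e a b) (e b a)} =
      {b | b ≠ a ∧ S.tp1 b ∈ P' ∧ R a b} := by
    intro a ha R
    ext b
    simp only [Set.mem_setOf_eq]
    refine and_congr_right fun h1 => and_congr_right fun h2 => ?_
    have hb'' : S.tp1 b ∉ P'' := fun h => Set.disjoint_left.mp hdisj h2 h
    have ha'' : ¬ (b ∈ B ∧ S.tp1 a ∈ P'') := by
      rintro ⟨hbB, haP⟩
      refine hb'' ?_
      rw [htp1B b hbB a ha]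
      exact haP
    rw [he_neg a b (fun hc => hb'' hc.2), he_neg b a ha'']
  -- P'' part: shift to rho a (for a ∈ B)
  have hP''_part : ∀ a ∈ B, ∀ (R : A → A → Prop),
      {b | b ≠ a ∧ S.tp1 b ∈ P'' ∧ R (e a b) (e b a)}.encard =
      {b | b ≠ rho a ∧ S.tp1 b ∈ P'' ∧ R (rho a) b}.encard := by
    intro a ha R
    by_cases haP : S.tp1 a ∈ P''
    · apply key_count B rho hmem hinj hsurj
      · ext b
        simp only [Set.mem_diff, Set.mem_setOf_eq]
        constructor
        · rintro ⟨⟨h1, h2, h3⟩, h4⟩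
          rw [he_pos a b ha h2, he_neg b a (fun hc => h4 hc.1)] at h3
          exact ⟨⟨fun hb => h4 (hb ▸ hmem a ha), h2, h3⟩, h4⟩
        · rintro ⟨⟨h1, h2, h3⟩, h4⟩
          refine ⟨⟨fun hb => h4 (hb ▸ ha), h2, ?_⟩, h4⟩
          rw [he_pos a b ha h2, he_neg b a (fun hc => h4 hc.1)]
          exact h3
      · intro b hbB
        simp only [Set.mem_setOf_eq]
        constructor
        · rintro ⟨h1, h2, h3⟩
          rw [he_pos a b ha h2, he_pos b a hbB haP] at h3
          refine ⟨fun hh => h1 (hinj hbB ha hh), ?_, h3⟩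
          rw [htp1rho b hbB]
          exact h2
        · rintro ⟨h1, h2, h3⟩
          rw [htp1rho b hbB] at h2
          refine ⟨fun hh => h1 (congrArg rho hh), h2, ?_⟩
          rw [he_pos a b ha h2, he_pos b a hbB haP]
          exact h3
    · congr 1
      ext b
      simp only [Set.mem_setOf_eq]
      constructor
      · rintro ⟨h1, h2, h3⟩
        rw [he_pos a b ha h2, he_neg b a (fun hc => haP hc.2)] at h3
        refine ⟨fun hb => haP ?_, h2, h3⟩
        · rw [← htp1rho a ha, ← hb]
          exact h2
      · rintro ⟨h1, h2, h3⟩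
        refine ⟨fun hb => haP (hb ▸ h2), h2, ?_⟩
        rw [he_pos a b ha h2, he_neg b a (fun hc => haP hc.2)]
        exact h3
  -- profile of Pᶜ preserved for every a
  have hpr_c : ∀ a : A, S''.pr (P' ∪ P'')ᶜ a = S.pr (P' ∪ P'')ᶜ a := by
    intro a
    funext μ
    show {b | b ≠ a ∧ S''.tp1 b ∈ (P' ∪ P'')ᶜ ∧ S''.tp2 a b = μ.1}.encard = _
    rw [hprset]
    by_cases haP : S.tp1 a ∈ P''
    · apply key_count B rho hmem hinj hsurj
      · ext b
        simp only [Set.mem_diff, Set.mem_setOf_eq]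
        constructor
        · rintro ⟨⟨h1, h2, h3⟩, h4⟩
          rw [he_neg a b (fun hc => h2 (Or.inr hc.2)), he_neg b a (fun hc => h4 hc.1)] at h3
          exact ⟨⟨h1, h2, h3⟩, h4⟩
        · rintro ⟨⟨h1, h2, h3⟩, h4⟩
          refine ⟨⟨h1, h2, ?_⟩, h4⟩
          rw [he_neg a b (fun hc => h2 (Or.inr hc.2)), he_neg b a (fun hc => h4 hc.1)]
          exact h3
      · intro b hbB
        by_cases haB : a ∈ B
        · refine iff_of_false ?_ ?_
          · rintro ⟨h1, h2, h3⟩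
            refine h2 (Or.inr ?_)
            rw [htp1B b hbB a haB]
            exact haP
          · rintro ⟨h1, h2, h3⟩
            refine h2 (Or.inr ?_)
            rw [htp1rho b hbB, htp1B b hbB a haB]
            exact haP
        · simp only [Set.mem_setOf_eq]
          constructor
          · rintro ⟨h1, h2, h3⟩
            rw [he_neg a b (fun hc => h2 (Or.inr hc.2)), he_pos b a hbB haP] at h3
            refine ⟨fun hh => haB (hh ▸ hmem b hbB), ?_, h3⟩
            rw [htp1rho b hbB]
            exact h2
          · rintro ⟨h1, h2, h3⟩
            rw [htp1rho b hbB] at h2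
            refine ⟨fun hh => haB (hh ▸ hbB), h2, ?_⟩
            rw [he_neg a b (fun hc => h2 (Or.inr hc.2)), he_pos b a hbB haP]
            exact h3
    · congr 1
      ext b
      simp only [Set.mem_setOf_eq]
      refine and_congr_right fun h1 => and_congr_right fun h2 => ?_
      rw [he_neg a b (fun hc => h2 (Or.inr hc.2)), he_neg b a (fun hc => haP hc.2)]
  -- profile preserved for a ∉ B
  have hpr_univ : ∀ a : A, a ∉ B → S''.pr Set.univ a = S.pr Set.univ a := by
    intro a haB
    funext μ
    show {b | b ≠ a ∧ S''.tp1 b ∈ Set.univ ∧ S''.tp2 a b = μ.1}.encard = _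
    rw [hprset]
    by_cases haP : S.tp1 a ∈ P''
    · apply key_count B rho hmem hinj hsurj
      · ext b
        simp only [Set.mem_diff, Set.mem_setOf_eq]
        constructor
        · rintro ⟨⟨h1, h2, h3⟩, h4⟩
          rw [he_neg a b (fun hc => haB hc.1), he_neg b a (fun hc => h4 hc.1)] at h3
          exact ⟨⟨h1, h2, h3⟩, h4⟩
        · rintro ⟨⟨h1, h2, h3⟩, h4⟩
          refine ⟨⟨h1, h2, ?_⟩, h4⟩
          rw [he_neg a b (fun hc => haB hc.1), he_neg b a (fun hc => h4 hc.1)]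
          exact h3
      · intro b hbB
        simp only [Set.mem_setOf_eq]
        constructor
        · rintro ⟨h1, h2, h3⟩
          rw [he_neg a b (fun hc => haB hc.1), he_pos b a hbB haP] at h3
          exact ⟨fun hh => haB (hh ▸ hmem b hbB), trivial, h3⟩
        · rintro ⟨h1, h2, h3⟩
          refine ⟨fun hh => haB (hh ▸ hbB), trivial, ?_⟩
          rw [he_neg a b (fun hc => haB hc.1), he_pos b a hbB haP]
          exact h3
    · congr 1
      ext b
      simp only [Set.mem_setOf_eq]
      refine and_congr_right fun h1 => and_congr_right fun h2 => ?_
      rw [he_neg a b (fun hc => haB hc.1), he_neg b a (fun hc => haP hc.2)]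
  -- counts preserved for a ∈ B
  have hct : ∀ a ∈ B, S''.ct (P' ∪ P'') a = S.ct (P' ∪ P'') a := by
    intro a ha
    funext f
    show {b | b ≠ a ∧ S''.tp1 b ∈ P' ∪ P'' ∧ S''.binary f.1 a b = true}.encard = _
    rw [hctset]
    have hrhs : S.ct (P' ∪ P'') a f =
        {b | b ≠ a ∧ S.tp1 b ∈ P' ∪ P'' ∧ S.binary f.1 a b = true}.encard := rfl
    rw [hrhs, hsplit (fun b => b ≠ a) (fun b => S.binary f.1 (e a b) (e b a) = true),
      hsplit (fun b => b ≠ a) (fun b => S.binary f.1 a b = true)]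
    congr 1
    · exact congrArg Set.encard (hP'_part a ha (fun x y => S.binary f.1 x y = true))
    · have h2 := hP''_part a ha (fun x y => S.binary f.1 x y = true)
      rw [h2]
      have h3 : S.ct P'' (rho a) f = S.ct P'' a f :=
        (congrFun (hB'' a ha (rho a) (hmem a ha)).2 f).symm
      exact h3
  -- the profile decomposition for a ∈ B
  have hfinal : ∀ a ∈ B, ∀ μ : MsgType σ,
      S''.pr (P' ∪ P'') a μ = S.pr P' a μ + S.pr P'' (rho a) μ := by
    intro a ha μ
    show {b | b ≠ a ∧ S''.tp1 b ∈ P' ∪ P'' ∧ S''.tp2 a b = μ.1}.encard = _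
    rw [hprset]
    rw [hsplit (fun b => b ≠ a) (fun b => S.tp2 (e a b) (e b a) = μ.1)]
    congr 1
    · exact congrArg Set.encard (hP'_part a ha (fun x y => S.tp2 x y = μ.1))
    · exact hP''_part a ha (fun x y => S.tp2 x y = μ.1)
  -- chromaticity
  have hchrom : S''.Chromatic := by
    constructor
    · intro a a' hne hinv
      rw [htp2'' a a' hne] at hinv
      have h := hchr.1 (e a a') (e a' a) (he_ne a a' hne) hinv
      rw [htp1'' a, htp1'' a', ← htpe a a', ← htpe a' a]
      exact h
    · intro a a' a'' hne1 hne2 hne3 hinv1 hinv2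
      rw [htp2'' a a' hne1] at hinv1
      rw [htp2'' a' a'' hne2] at hinv2
      rw [htp1'' a, htp1'' a'']
      by_cases hcb : e a' a = e a' a''
      · have hbc : e a a' ≠ e a'' a' := by
          intro hbc
          by_cases c1 : a ∈ B ∧ S.tp1 a' ∈ P''
          · by_cases c2 : a'' ∈ B ∧ S.tp1 a' ∈ P''
            · rw [he_pos a a' c1.1 c1.2, he_pos a'' a' c2.1 c2.2] at hbc
              exact hne3 (hinj c1.1 c2.1 hbc)
            · have ha''B : a'' ∉ B := fun h => c2 ⟨h, c1.2⟩
              rw [he_pos a a' c1.1 c1.2, he_neg a'' a' c2] at hbc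
              exact ha''B (hbc ▸ hmem a c1.1)
          · by_cases c2 : a'' ∈ B ∧ S.tp1 a' ∈ P''
            · have haB : a ∉ B := fun h => c1 ⟨h, c2.2⟩
              rw [he_neg a a' c1, he_pos a'' a' c2.1 c2.2] at hbc
              exact haB (hbc.symm ▸ hmem a'' c2.1)
            · rw [he_neg a a' c1, he_neg a'' a' c2] at hbc
              exact hne3 hbc
        have h := hchr.2 (e a a') (e a' a) (e a'' a')
          (he_ne a a' hne1) (hcb ▸ he_ne a' a'' hne2) hbc hinv1 (hcb ▸ hinv2)
        rw [← htpe a a', ← htpe a'' a']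
        exact h
      · intro heq
        apply hcb
        by_cases ha'B : a' ∈ B
        · by_cases haP : S.tp1 a ∈ P''
          · rw [he_pos a' a ha'B haP, he_pos a' a'' ha'B (heq ▸ haP)]
          · rw [he_neg a' a (fun hc => haP hc.2), he_neg a' a'' (fun hc => haP (heq ▸ hc.2))]
        · rw [he_neg a' a (fun hc => ha'B hc.1), he_neg a' a'' (fun hc => ha'B hc.1)]
  refine ⟨S'', ⟨hchrom, ?_, ?_⟩, hfinal⟩
  · rintro τ ⟨a, b, hab, heq⟩
    exact ⟨e a b, e b a, he_ne a b hab, by rw [← htp2'' a b hab]; exact heq⟩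
  · intro a
    refine ⟨htp1'' a, hpr_c a, hpr_univ a, hct a⟩

end Construct

/-- Lemma 8 (profile grouping): if B is both a Π'-group realizing J' different
Π'-profiles and a Π''-group realizing J'' different Π''-profiles (Π', Π''
disjoint and nonempty), then some (Π'∪Π'',B)-approximation realizes at most
J'+J'' different (Π'∪Π'')-profiles on B. -/
theorem profile_grouping (σ : CSig) (A : Type) [Countable A] (S : Struc σ A)
    (hfb : S.FinitelyBranching) (hchr : S.Chromatic)
    (P' P'' : Set (OneType σ)) (hdisj : Disjoint P' P'')
    (h1 : P'.Nonempty) (h2 : P''.Nonempty)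
    (B : Set A) (hB' : PiGroup S P' B) (hB'' : PiGroup S P'' B)
    (J' J'' : ℕ)
    (hJ' : (S.pr P' '' B).encard = (J' : ℕ∞))
    (hJ'' : (S.pr P'' '' B).encard = (J'' : ℕ∞)) :
    ∃ S'' : Struc σ A, PiBApprox S S'' (P' ∪ P'') B ∧
      (S''.pr (P' ∪ P'') '' B).encard ≤ ((J' + J'' : ℕ) : ℕ∞) := by
  classical
  let g : ↥B → (MsgType σ → ℕ∞) := fun c => S.pr P' c.1
  let h : ↥B → (MsgType σ → ℕ∞) := fun c => S.pr P'' c.1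
  have hg : (Set.range g).encard ≤ (J' : ℕ∞) := by
    rw [Set.image_eq_range] at hJ'
    exact le_of_eq hJ'
  have hh : (Set.range h).encard ≤ (J'' : ℕ∞) := by
    rw [Set.image_eq_range] at hJ''
    exact le_of_eq hJ''
  obtain ⟨ρ0, hρ0⟩ := pair_lemma (J' + J'') ↥B ↥B inferInstance inferInstance rfl g h J' J''
    le_rfl hg hh
  let rho : A → A := fun a => if ha : a ∈ B then (ρ0 ⟨a, ha⟩ : A) else a
  have hrho_eq : ∀ a (ha : a ∈ B), rho a = (ρ0 ⟨a, ha⟩ : A) := by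
    intro a ha
    simp only [rho, dif_pos ha]
  have hmem : ∀ a ∈ B, rho a ∈ B := by
    intro a ha
    rw [hrho_eq a ha]
    exact (ρ0 ⟨a, ha⟩).2
  have hinj : Set.InjOn rho B := by
    intro a ha b hb hab
    rw [hrho_eq a ha, hrho_eq b hb] at hab
    have := ρ0.injective (Subtype.val_injective hab)
    exact congrArg Subtype.val this
  have hsurj : Set.SurjOn rho B B := by
    intro c hc
    refine ⟨(ρ0.symm ⟨c, hc⟩).1, (ρ0.symm ⟨c, hc⟩).2, ?_⟩
    rw [hrho_eq _ (ρ0.symm ⟨c, hc⟩).2]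
    have : (⟨(ρ0.symm ⟨c, hc⟩).1, (ρ0.symm ⟨c, hc⟩).2⟩ : ↥B) = ρ0.symm ⟨c, hc⟩ := rfl
    rw [this, ρ0.apply_symm_apply]
  obtain ⟨S'', happrox, hfin⟩ := construct S hchr P' P'' hdisj B hB' hB'' rho hmem hinj hsurj
  refine ⟨S'', happrox, ?_⟩
  have hsub : S''.pr (P' ∪ P'') '' B ⊆
      (fun p : (MsgType σ → ℕ∞) × (MsgType σ → ℕ∞) => fun τ => p.1 τ + p.2 τ) ''
        (Set.range fun c : ↥B => (g c, h (ρ0 c))) := by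
    rintro x ⟨a, haB, rfl⟩
    refine ⟨(g ⟨a, haB⟩, h (ρ0 ⟨a, haB⟩)), ⟨⟨a, haB⟩, rfl⟩, ?_⟩
    funext τ
    show g ⟨a, haB⟩ τ + h (ρ0 ⟨a, haB⟩) τ = S''.pr (P' ∪ P'') a τ
    rw [hfin a haB τ, hrho_eq a haB]
  calc (S''.pr (P' ∪ P'') '' B).encard
      ≤ _ := Set.encard_mono hsub
    _ ≤ (Set.range fun c : ↥B => (g c, h (ρ0 c))).encard := Set.encard_image_le _ _
    _ ≤ ((J' + J'' : ℕ) : ℕ∞) := hρ0
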